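/- Fix 0 < α < 1, ω ∈ ℝ and x > 0. Define the real-valued function ν(y) = Re[ Γ(1 - α/2 + iω) · ((α/2 + iω)/α) · y^{α/2 - iω} ] for y ≥ 1, where Γ is the complex Gamma function and y^{z} = exp(z log y). Then lim_{t → 0⁺} [ (t x)^{-α/2} ∫_{1}^{∞} α y^{-1-α} (1 - e^{-t x y}) ν(y) dy - |Γ(1 - α/2 - iω)|² cos(ω · log(t x)) ] = 0. -/

import Mathlib

open MeasureTheory

namespace Stmt6Aux

open Set Complex Filter


lemma myDeriv (β : ℂ) (s : ℝ) {y : ℝ} (hy : 0 < y) :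
    HasDerivAt (fun u : ℝ => -((u:ℂ)^(-β) * (1 - Complex.exp (-(s*u)))))
      (β * (y:ℂ)^(-1-β) * (1 - Complex.exp (-(s*y))) - s * (y:ℂ)^(-β) * Complex.exp (-(s*y))) y := by
  have h1 : HasDerivAt (fun u : ℝ => (u:ℂ)^(-β)) (-β * (y:ℂ)^(-β-1)) y :=
    ((Complex.hasStrictDerivAt_cpow_const (Complex.ofReal_mem_slitPlane.2 hy)).hasDerivAt).comp_ofReal
  have h2 : HasDerivAt (fun u : ℝ => (1 - Complex.exp (-(s*u)))) (Complex.exp (-(s*y)) * (s:ℂ)) y := by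
    have g : HasDerivAt (fun z : ℂ => (1 - Complex.exp (-(s*z)))) (Complex.exp (-(s*y)) * (s:ℂ)) (y:ℂ) := by
      have := (((hasDerivAt_id ((y:ℝ):ℂ)).const_mul (s:ℂ)).neg).cexp.const_sub 1
      simpa using this
    exact g.comp_ofReal
  have := (h1.mul h2).neg
  refine this.congr_deriv ?_
  have hyne : (y:ℂ) ≠ 0 := Complex.ofReal_ne_zero.2 hy.ne'
  have e1 : (y:ℂ)^(-1-β) = (y:ℂ)^(-β-1) := by ring_nf
  rw [e1]
  have e2 : (y:ℂ)^(-β-1) = (y:ℂ)^(-β) / y := by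
    rw [Complex.cpow_sub _ _ hyne, Complex.cpow_one]
  ring

lemma cont1 (c : ℂ) (s : ℝ) : ContinuousOn (fun y : ℝ => (y:ℂ)^c * (1 - Complex.exp (-(s*y)))) (Ioi 1) := by
  intro y hy
  have hy1 : (1:ℝ) < y := hy
  refine ContinuousWithinAt.mul ?_ ?_
  · exact (Complex.continuousAt_ofReal_cpow_const _ _ (Or.inr (by positivity))).continuousWithinAt
  · exact (Continuous.continuousWithinAt (by continuity))

lemma cont2 (c : ℂ) (s : ℝ) : ContinuousOn (fun y : ℝ => (y:ℂ)^c * Complex.exp (-(s*y))) (Ioi 1) := by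
  intro y hy
  have hy1 : (1:ℝ) < y := hy
  refine ContinuousWithinAt.mul ?_ ?_
  · exact (Complex.continuousAt_ofReal_cpow_const _ _ (Or.inr (by positivity))).continuousWithinAt
  · exact (Continuous.continuousWithinAt (by continuity))

lemma int1 (β : ℂ) (hβ : 0 < β.re) (s : ℝ) (hs : 0 ≤ s) :
    IntegrableOn (fun y : ℝ => (y:ℂ)^(-1-β) * (1 - Complex.exp (-(s*y)))) (Ioi 1) := by
  refine Integrable.mono' ((integrableOn_Ioi_rpow_of_lt (show (-1-β.re) < -1 by linarith) one_pos).const_mul 2)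
    ((cont1 _ s).aestronglyMeasurable measurableSet_Ioi) ?_
  filter_upwards [ae_restrict_mem measurableSet_Ioi] with y hy
  have hy0 : (0:ℝ) < y := lt_trans one_pos hy
  rw [norm_mul, Complex.norm_cpow_eq_rpow_re_of_pos hy0]
  have h2 : ‖1 - Complex.exp (-(s*y))‖ ≤ 2 := by
    refine (norm_sub_le _ _).trans ?_
    have hh : ‖Complex.exp (-((s*y:ℝ):ℂ))‖ ≤ 1 := by
      rw [Complex.norm_exp]
      simp only [neg_re, ofReal_re]
      exact Real.exp_le_one_iff.2 (neg_nonpos.2 (mul_nonneg hs hy0.le))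
    push_cast at hh
    simp only [norm_one]
    linarith
  have : (-1-β).re = -1-β.re := by simp
  rw [this]
  calc y ^ (-1 - β.re) * ‖1 - Complex.exp (-(s*y))‖ ≤ y ^ (-1 - β.re) * 2 := by
        exact mul_le_mul_of_nonneg_left h2 (Real.rpow_nonneg hy0.le _)
    _ = 2 * y ^ (-1 - β.re) := mul_comm _ _

lemma int2 (β : ℂ) (hβ : 0 < β.re) (s : ℝ) (hs : 0 < s) :
    IntegrableOn (fun y : ℝ => (y:ℂ)^(-β) * Complex.exp (-(s*y))) (Ioi 1) := by
  refine Integrable.mono' (exp_neg_integrableOn_Ioi 1 hs)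
    ((cont2 _ s).aestronglyMeasurable measurableSet_Ioi) ?_
  filter_upwards [ae_restrict_mem measurableSet_Ioi] with y hy
  have hy1 : (1:ℝ) < y := hy
  have hy0 : (0:ℝ) < y := lt_trans one_pos hy1
  rw [norm_mul, Complex.norm_cpow_eq_rpow_re_of_pos hy0,
    Complex.norm_exp]
  simp only [neg_re, mul_re, ofReal_re, ofReal_im, mul_im]
  have h1 : y ^ (-β).re ≤ 1 := by
    rw [neg_re]
    exact Real.rpow_le_one_of_one_le_of_nonpos hy1.le (by linarith)
  have : Real.exp (-(s * y - 0 * 0)) = Real.exp (-(s*y)) := by ring_nf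
  rw [this]
  calc y ^ (-β).re * Real.exp (-(s*y)) ≤ 1 * Real.exp (-(s*y)) :=
        mul_le_mul_of_nonneg_right h1 (Real.exp_pos _).le
    _ = Real.exp (-(s*y)) := one_mul _
    _ = Real.exp (-s*y) := by ring_nf

lemma ftc (β : ℂ) (hβ0 : 0 < β.re) (s : ℝ) (hs : 0 < s) :
    β * ∫ y in Ioi (1:ℝ), (y:ℂ)^(-1-β) * (1 - Complex.exp (-(s*y)))
      = (1 - Complex.exp (-(s:ℂ))) + s * ∫ y in Ioi (1:ℝ), (y:ℂ)^(-β) * Complex.exp (-(s*y)) := by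
  set f : ℝ → ℂ := fun u => -((u:ℂ)^(-β) * (1 - Complex.exp (-(s*u)))) with hf
  set f' : ℝ → ℂ := fun y => β * ((y:ℂ)^(-1-β) * (1 - Complex.exp (-(s*y)))) - s * ((y:ℂ)^(-β) * Complex.exp (-(s*y))) with hf'
  have hderiv : ∀ y ∈ Ioi (1:ℝ), HasDerivAt f (f' y) y := by
    intro y hy
    have := myDeriv β s (lt_trans one_pos hy)
    convert this using 1
    simp [hf', mul_assoc]
  have hint1 := int1 β hβ0 s hs.le
  have hint2 := int2 β hβ0 s hs
  have f'int : IntegrableOn f' (Ioi 1) := (hint1.const_mul β).sub (hint2.const_mul (s:ℂ))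
  have hlim : Tendsto f atTop (nhds 0) := by
    refine squeeze_zero_norm' (a := fun y : ℝ => 2 * y ^ (-β.re)) ?_ ?_
    · filter_upwards [eventually_gt_atTop (1:ℝ)] with y hy
      have hy0 : (0:ℝ) < y := lt_trans one_pos hy
      have : ‖f y‖ = ‖(y:ℂ)^(-β)‖ * ‖1 - Complex.exp (-(s*y))‖ := by
        rw [hf]; simp [norm_mul]
      rw [this, Complex.norm_cpow_eq_rpow_re_of_pos hy0]
      have h2 : ‖1 - Complex.exp (-((s*y:ℝ):ℂ))‖ ≤ 2 := by
        have hh : ‖Complex.exp (-((s*y:ℝ):ℂ))‖ ≤ 1 := by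
          rw [Complex.norm_exp]
          simp only [neg_re, ofReal_re]
          exact Real.exp_le_one_iff.2 (neg_nonpos.2 (mul_nonneg hs.le hy0.le))
        calc ‖1 - Complex.exp (-((s*y:ℝ):ℂ))‖ ≤ ‖(1:ℂ)‖ + ‖Complex.exp (-((s*y:ℝ):ℂ))‖ := norm_sub_le _ _
          _ ≤ 1 + 1 := by rw [norm_one]; linarith
          _ = 2 := by norm_num
      have hre : (-β).re = -β.re := by simp
      rw [hre]
      push_cast at h2
      calc y ^ (-β.re) * ‖1 - Complex.exp (-(s*y))‖ ≤ y ^ (-β.re) * 2 :=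
            mul_le_mul_of_nonneg_left h2 (Real.rpow_nonneg hy0.le _)
        _ = 2 * y ^ (-β.re) := mul_comm _ _
    · simpa using (tendsto_rpow_neg_atTop hβ0).const_mul (2:ℝ)
  have key := integral_Ioi_of_hasDerivAt_of_tendsto
    ((myDeriv β s one_pos).continuousAt.continuousWithinAt) hderiv f'int hlim
  simp only [Complex.ofReal_one, Complex.one_cpow, mul_one, zero_sub, neg_neg, one_mul] at key
  have split : ∫ y in Ioi (1:ℝ), f' y
      = β * (∫ y in Ioi (1:ℝ), (y:ℂ)^(-1-β) * (1 - Complex.exp (-(s*y))))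
        - s * (∫ y in Ioi (1:ℝ), (y:ℂ)^(-β) * Complex.exp (-(s*y))) := by
    rw [hf']
    rw [integral_sub (hint1.const_mul β) (hint2.const_mul (s:ℂ)), integral_const_mul, integral_const_mul]
  rw [split] at key
  linear_combination key

lemma gam (β : ℂ) (hβ1 : β.re < 1) (s : ℝ) (hs : 0 < s) :
    ∫ y in Ioi (0:ℝ), (y:ℂ)^(-β) * Complex.exp (-((s:ℂ)*y)) = Complex.Gamma (1-β) * (s:ℂ)^(β-1) := by
  have h := integral_cpow_mul_exp_neg_mul_Ioi (a := 1-β) (r := s) (by simp; linarith) hs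
  have e1 : ∀ y : ℝ, (y:ℂ) ^ (1-β-1) = (y:ℂ)^(-β) := by intro y; ring_nf
  simp_rw [e1] at h
  rw [h]
  have hsne : (s:ℂ) ≠ 0 := Complex.ofReal_ne_zero.2 hs.ne'
  have harg : (s:ℂ).arg ≠ Real.pi := by
    rw [Complex.arg_ofReal_of_nonneg hs.le]
    exact Real.pi_ne_zero.symm
  have : ((1:ℂ)/s) ^ (1-β) = (s:ℂ)^(β-1) := by
    rw [one_div, Complex.inv_cpow _ _ harg, ← Complex.cpow_neg]
    ring_nf
  rw [this, mul_comm]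

lemma intIoc (β : ℂ) (hβ1 : β.re < 1) (s : ℝ) (hs : 0 < s) :
    IntegrableOn (fun y : ℝ => (y:ℂ)^(-β) * Complex.exp (-((s:ℂ)*y))) (Ioc 0 1) := by
  have hbase : IntegrableOn (fun y : ℝ => y ^ (-β.re)) (Ioc (0:ℝ) 1) := by
    rw [← intervalIntegrable_iff_integrableOn_Ioc_of_le zero_le_one]
    exact intervalIntegral.intervalIntegrable_rpow' (by linarith)
  refine Integrable.mono' hbase ?_ ?_
  · refine (ContinuousOn.aestronglyMeasurable ?_ measurableSet_Ioc)
    intro y hy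
    refine ContinuousWithinAt.mul ?_ (Continuous.continuousWithinAt (by continuity))
    exact (Complex.continuousAt_ofReal_cpow_const _ _ (Or.inr hy.1.ne')).continuousWithinAt
  · filter_upwards [ae_restrict_mem measurableSet_Ioc] with y hy
    have hy0 : (0:ℝ) < y := hy.1
    rw [norm_mul, Complex.norm_cpow_eq_rpow_re_of_pos hy0,
      Complex.norm_exp]
    have : (-((s:ℂ)*y)).re = -(s*y) := by simp
    rw [this, neg_re]
    calc y ^ (-β.re) * Real.exp (-(s*y)) ≤ y ^ (-β.re) * 1 := by
          refine mul_le_mul_of_nonneg_left ?_ (Real.rpow_nonneg hy0.le _)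
          exact Real.exp_le_one_iff.2 (neg_nonpos.2 (mul_nonneg hs.le hy0.le))
      _ = y ^ (-β.re) := mul_one _

lemma iocBound (β : ℂ) (hβ0 : 0 < β.re) (hβh : β.re ≤ 1/2) (s : ℝ) (hs : 0 < s) :
    ‖∫ y in Ioc (0:ℝ) 1, (y:ℂ)^(-β) * Complex.exp (-((s:ℂ)*y))‖ ≤ 2 := by
  have hval : ∫ y in Ioc (0:ℝ) 1, y ^ (-β.re) = 1/(1-β.re) := by
    rw [← intervalIntegral.integral_of_le zero_le_one]
    rw [integral_rpow (Or.inl (by linarith))]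
    rw [Real.one_rpow, Real.zero_rpow (by linarith)]
    ring_nf
  have hb := norm_integral_le_of_norm_le (μ := volume.restrict (Ioc (0:ℝ) 1))
    (f := fun y : ℝ => (y:ℂ)^(-β) * Complex.exp (-((s:ℂ)*y))) (g := fun y : ℝ => y ^ (-β.re)) ?_ ?_
  · refine hb.trans ?_
    rw [hval]
    rw [div_le_iff₀ (by linarith)]
    linarith
  · exact (intervalIntegrable_iff_integrableOn_Ioc_of_le zero_le_one).1
      (intervalIntegral.intervalIntegrable_rpow' (by linarith))
  · filter_upwards [ae_restrict_mem measurableSet_Ioc] with y hy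
    have hy0 : (0:ℝ) < y := hy.1
    rw [norm_mul, Complex.norm_cpow_eq_rpow_re_of_pos hy0,
      Complex.norm_exp]
    have : (-((s:ℂ)*y)).re = -(s*y) := by simp
    rw [this, neg_re]
    calc y ^ (-β.re) * Real.exp (-(s*y)) ≤ y ^ (-β.re) * 1 := by
          refine mul_le_mul_of_nonneg_left ?_ (Real.rpow_nonneg hy0.le _)
          exact Real.exp_le_one_iff.2 (neg_nonpos.2 (mul_nonneg hs.le hy0.le))
      _ = y ^ (-β.re) := mul_one _

lemma main_est (β : ℂ) (hβ0 : 0 < β.re) (hβh : β.re ≤ 1/2) (s : ℝ) (hs : 0 < s) :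
    ∃ E : ℂ, ‖E‖ ≤ 3*s ∧
      β * (∫ y in Ioi (1:ℝ), (y:ℂ)^(-1-β) * (1 - Complex.exp (-((s:ℂ)*y))))
        = Complex.Gamma (1-β) * (s:ℂ)^β + E := by
  set I0 : ℂ := ∫ y in Ioc (0:ℝ) 1, (y:ℂ)^(-β) * Complex.exp (-((s:ℂ)*y)) with hI0
  refine ⟨(1 - Complex.exp (-(s:ℂ))) - s * I0, ?_, ?_⟩
  · have h1 : ‖(1:ℂ) - Complex.exp (-(s:ℂ))‖ ≤ s := by
      have : (1:ℂ) - Complex.exp (-(s:ℂ)) = ((1 - Real.exp (-s) : ℝ) : ℂ) := by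
        push_cast [Complex.ofReal_exp]
        ring
      rw [this, Complex.norm_real, Real.norm_eq_abs]
      refine abs_le.2 ⟨?_, ?_⟩
      · have := Real.exp_le_one_iff.2 (neg_nonpos.2 hs.le)
        linarith
      · nlinarith [Real.add_one_le_exp (-s)]
    have h2 : ‖(s:ℂ) * I0‖ ≤ s * 2 := by
      rw [norm_mul, Complex.norm_real, Real.norm_eq_abs, abs_of_pos hs]
      exact mul_le_mul_of_nonneg_left (iocBound β hβ0 hβh s hs) hs.le
    calc ‖(1 - Complex.exp (-(s:ℂ))) - s * I0‖ ≤ ‖(1:ℂ) - Complex.exp (-(s:ℂ))‖ + ‖(s:ℂ) * I0‖ := norm_sub_le _ _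
      _ ≤ s + s * 2 := add_le_add h1 h2
      _ = 3 * s := by ring
  · have hsplit : (∫ y in Ioi (0:ℝ), (y:ℂ)^(-β) * Complex.exp (-((s:ℂ)*y)))
        = I0 + ∫ y in Ioi (1:ℝ), (y:ℂ)^(-β) * Complex.exp (-((s:ℂ)*y)) := by
      rw [hI0, ← setIntegral_union (Set.Ioc_disjoint_Ioi le_rfl) measurableSet_Ioi
        (intIoc β (by linarith) s hs) (int2 β hβ0 s hs), Set.Ioc_union_Ioi_eq_Ioi zero_le_one]
    have hgam := gam β (by linarith) s hs
    rw [hgam] at hsplit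
    have hspow : (s:ℂ) * (s:ℂ)^(β-1) = (s:ℂ)^β := by
      have hsne : (s:ℂ) ≠ 0 := Complex.ofReal_ne_zero.2 hs.ne'
      rw [show β = (β-1)+1 by ring, Complex.cpow_add _ _ hsne, Complex.cpow_one]
      ring
    have := ftc β hβ0 s hs
    linear_combination this - (s:ℂ) * hsplit + Complex.Gamma (1-β) * hspow

lemma re_cpow (s a b : ℝ) (hs : 0 < s) :
    (((s:ℂ)) ^ (((a:ℝ):ℂ) + ((b:ℝ):ℂ)*Complex.I)).re = s ^ a * Real.cos (b * Real.log s) := by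
  rw [Complex.cpow_def_of_ne_zero (Complex.ofReal_ne_zero.2 hs.ne'), ← Complex.ofReal_log hs.le,
    Complex.exp_re]
  have h1 : ((Real.log s : ℂ) * (((a:ℝ):ℂ) + ((b:ℝ):ℂ)*Complex.I)).re = Real.log s * a := by
    simp [Complex.mul_re]
  have h2 : ((Real.log s : ℂ) * (((a:ℝ):ℂ) + ((b:ℝ):ℂ)*Complex.I)).im = Real.log s * b := by
    simp [Complex.mul_im]
  rw [h1, h2, Real.rpow_def_of_pos hs, mul_comm (Real.log s) b]

lemma ptwise (α ω : ℝ) (h0 : 0 < α) (s : ℝ) {y : ℝ} (hy : 1 < y) :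
    α * y ^ (-1 - α) * (1 - Real.exp (-(s * y))) *
      (Complex.Gamma (1 - (α : ℂ)/2 + (ω : ℂ) * Complex.I) *
        (((α : ℂ)/2 + (ω : ℂ) * Complex.I) / (α : ℂ)) *
        (y : ℂ) ^ ((α : ℂ)/2 - (ω : ℂ) * Complex.I)).re
    = ((Complex.Gamma (1 - (α : ℂ)/2 + (ω : ℂ) * Complex.I) * ((α : ℂ)/2 + (ω : ℂ) * Complex.I)) *
        ((y:ℂ) ^ (-1 - ((α : ℂ)/2 + (ω : ℂ) * Complex.I)) * (1 - Complex.exp (-((s:ℂ) * y))))).re := by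
  have hy0 : (0:ℝ) < y := lt_trans one_pos hy
  have hyne : (y:ℂ) ≠ 0 := Complex.ofReal_ne_zero.2 hy0.ne'
  have hα : (α:ℂ) ≠ 0 := Complex.ofReal_ne_zero.2 h0.ne'
  rw [← Complex.re_ofReal_mul]
  congr 1
  have hsplitpow : (y:ℂ) ^ (-1 - ((α:ℂ)/2 + (ω:ℂ)*Complex.I))
      = (y:ℂ)^(((-1-α : ℝ):ℂ)) * (y:ℂ)^((α:ℂ)/2 - (ω:ℂ)*Complex.I) := by
    rw [← Complex.cpow_add _ _ hyne]
    congr 1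
    push_cast
    ring
  rw [hsplitpow]
  have hcp : ((y ^ (-1-α) : ℝ) : ℂ) = (y:ℂ)^(((-1-α:ℝ)):ℂ) := Complex.ofReal_cpow hy0.le _
  have hexp : ((Real.exp (-(s*y)) : ℝ) : ℂ) = Complex.exp (-((s:ℂ)*y)) := by
    rw [Complex.ofReal_exp]
    norm_cast
  push_cast [hcp, hexp]
  field_simp


end Stmt6Aux

open Stmt6Aux Set Complex Filter

/-- Log-periodic eigenfunction relation for the higher modes: with
`ν(y) = Re[Γ(1-α/2+iω) ((α/2+iω)/α) y^{α/2-iω}]`, as `t → 0⁺` one has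
`(tx)^{-α/2} Π_{α,t}[ν](x) - |Γ(1-α/2-iω)|² cos(ω ln(tx)) → 0`. -/
theorem stmt6 (α : ℝ) (h0 : 0 < α) (h1 : α < 1) (ω : ℝ) (x : ℝ) (hx : 0 < x) :
    Filter.Tendsto
      (fun t : ℝ =>
        (t * x) ^ (-(α/2)) *
          (∫ y in Set.Ioi (1 : ℝ),
            α * y ^ (-1 - α) * (1 - Real.exp (-(t * x * y))) *
              (Complex.Gamma (1 - (α : ℂ)/2 + (ω : ℂ) * Complex.I) *
                (((α : ℂ)/2 + (ω : ℂ) * Complex.I) / (α : ℂ)) *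
                (y : ℂ) ^ ((α : ℂ)/2 - (ω : ℂ) * Complex.I)).re)
        - ‖Complex.Gamma (1 - (α : ℂ)/2 - (ω : ℂ) * Complex.I)‖ ^ 2 *
            Real.cos (ω * Real.log (t * x)))
      (nhdsWithin 0 (Set.Ioi 0)) (nhds 0) := by
  set β : ℂ := (α:ℂ)/2 + (ω:ℂ)*Complex.I with hβ
  have hβre : β.re = α/2 := by simp [hβ]
  have hβ0 : 0 < β.re := by rw [hβre]; linarith
  have hβh : β.re ≤ 1/2 := by rw [hβre]; linarith
  set Γp : ℂ := Complex.Gamma (1 - (α:ℂ)/2 + (ω:ℂ)*Complex.I) with hΓp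
  have hconj : Γp = (starRingEnd ℂ) (Complex.Gamma (1-β)) := by
    rw [hΓp, ← Complex.Gamma_conj]
    congr 1
    rw [hβ]
    simp only [map_sub, map_add, map_one, map_mul, Complex.conj_ofReal, Complex.conj_I,
      map_div₀, map_ofNat]
    try ring
  have hA : Γp * Complex.Gamma (1-β)
      = ((‖Complex.Gamma (1 - (α:ℂ)/2 - (ω:ℂ)*Complex.I)‖ ^ 2 : ℝ) : ℂ) := by
    have h1β : 1 - (α:ℂ)/2 - (ω:ℂ)*Complex.I = 1 - β := by rw [hβ]; ring
    rw [hconj, mul_comm, Complex.mul_conj, Complex.normSq_eq_norm_sq, h1β]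
  set A : ℝ := ‖Complex.Gamma (1 - (α:ℂ)/2 - (ω:ℂ)*Complex.I)‖ ^ 2 with hAdef
  have heq : ∀ t : ℝ, t ∈ Ioi (0:ℝ) → ∃ E : ℂ, ‖E‖ ≤ 3*(t*x) ∧
      ((t * x) ^ (-(α/2)) *
          (∫ y in Set.Ioi (1 : ℝ),
            α * y ^ (-1 - α) * (1 - Real.exp (-(t * x * y))) *
              (Complex.Gamma (1 - (α : ℂ)/2 + (ω : ℂ) * Complex.I) *
                (((α : ℂ)/2 + (ω : ℂ) * Complex.I) / (α : ℂ)) *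
                (y : ℂ) ^ ((α : ℂ)/2 - (ω : ℂ) * Complex.I)).re)
        - A * Real.cos (ω * Real.log (t * x)))
      = (t*x) ^ (-(α/2)) * (Γp * E).re := by
    intro t ht
    have hs : 0 < t*x := mul_pos ht hx
    obtain ⟨E, hE, hkey⟩ := main_est β hβ0 hβh (t*x) hs
    refine ⟨E, hE, ?_⟩
    have hI : (∫ y in Set.Ioi (1 : ℝ),
            α * y ^ (-1 - α) * (1 - Real.exp (-(t * x * y))) *
              (Complex.Gamma (1 - (α : ℂ)/2 + (ω : ℂ) * Complex.I) *
                (((α : ℂ)/2 + (ω : ℂ) * Complex.I) / (α : ℂ)) *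
                (y : ℂ) ^ ((α : ℂ)/2 - (ω : ℂ) * Complex.I)).re)
        = ((Γp * β) * ∫ y in Set.Ioi (1:ℝ),
            (y:ℂ)^(-1-β) * (1 - Complex.exp (-(((t*x : ℝ):ℂ) * y)))).re := by
      rw [setIntegral_congr_fun measurableSet_Ioi (fun y hy => ptwise α ω h0 (t*x) hy)]
      have hint : Integrable (fun y : ℝ =>
          (Γp * β) * ((y:ℂ)^(-1-β) * (1 - Complex.exp (-(((t*x : ℝ):ℂ) * y)))))
          (volume.restrict (Ioi 1)) := by
        have := (int1 β hβ0 (t*x) hs.le).const_mul (Γp * β)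
        exact this
      have := integral_re (μ := volume.restrict (Ioi (1:ℝ))) hint
      simp only [RCLike.re_to_complex] at this
      rw [this, integral_const_mul]
    rw [hI]
    have hassoc : (Γp * β) * (∫ y in Set.Ioi (1:ℝ),
        (y:ℂ)^(-1-β) * (1 - Complex.exp (-(((t*x : ℝ):ℂ) * y))))
        = Γp * Complex.Gamma (1-β) * ((t*x : ℝ):ℂ)^β + Γp * E := by
      rw [mul_assoc, hkey]
      ring
    rw [hassoc, hA]
    have hre : ((((A:ℝ)):ℂ) * ((t*x : ℝ):ℂ)^β + Γp * E).re
        = A * ((t*x)^(α/2) * Real.cos (ω * Real.log (t*x))) + (Γp * E).re := by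
      rw [Complex.add_re, Complex.re_ofReal_mul]
      congr 2
      have hexp : (((t*x : ℝ):ℂ))^β = (((t*x : ℝ):ℂ)) ^ (((α/2 : ℝ):ℂ) + ((ω:ℝ):ℂ)*Complex.I) := by
        rw [hβ]; norm_num
      rw [hexp, re_cpow (t*x) (α/2) ω hs]
    rw [hre]
    have hcancel : (t*x) ^ (-(α/2)) * (t*x)^(α/2) = 1 := by
      rw [← Real.rpow_add hs]; norm_num
    linear_combination (A * Real.cos (ω * Real.log (t * x))) * hcancel
  refine squeeze_zero_norm' (a := fun t : ℝ => (3 * ‖Γp‖) * (t*x)^(1-α/2)) ?_ ?_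
  · filter_upwards [self_mem_nhdsWithin] with t ht
    obtain ⟨E, hE, hFe⟩ := heq t ht
    rw [hFe]
    have hs : 0 < t*x := mul_pos ht hx
    have h1 : |(Γp*E).re| ≤ ‖Γp‖ * (3*(t*x)) := by
      calc |(Γp*E).re| ≤ ‖Γp*E‖ := Complex.abs_re_le_norm _
        _ = ‖Γp‖ * ‖E‖ := norm_mul _ _
        _ ≤ ‖Γp‖ * (3*(t*x)) := by
            refine mul_le_mul_of_nonneg_left ?_ (norm_nonneg _)
            exact hE
    have hp : (t*x)^(-(α/2)) * (t*x) = (t*x)^(1-α/2) := by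
      rw [show (1:ℝ)-α/2 = (-(α/2)) + 1 by ring, Real.rpow_add hs, Real.rpow_one]
    rw [Real.norm_eq_abs, abs_mul, _root_.abs_of_nonneg (Real.rpow_nonneg hs.le _)]
    calc (t*x)^(-(α/2)) * |(Γp*E).re| ≤ (t*x)^(-(α/2)) * (‖Γp‖ * (3*(t*x))) :=
          mul_le_mul_of_nonneg_left h1 (Real.rpow_nonneg hs.le _)
      _ = 3*‖Γp‖ * ((t*x)^(-(α/2)) * (t*x)) := by ring
      _ = 3*‖Γp‖ * (t*x)^(1-α/2) := by rw [hp]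
  · have hmul : Tendsto (fun t : ℝ => t*x) (nhdsWithin 0 (Ioi 0)) (nhds 0) := by
      have h : Tendsto (fun t : ℝ => t*x) (nhds 0) (nhds 0) := by
        simpa using (continuous_mul_right x).tendsto (0:ℝ)
      exact h.mono_left nhdsWithin_le_nhds
    have hrp : Tendsto (fun u : ℝ => u ^ ((1:ℝ)-α/2)) (nhds 0) (nhds 0) := by
      have hc := (Real.continuousAt_rpow_const 0 ((1:ℝ)-α/2) (Or.inr (by linarith))).tendsto
      rwa [Real.zero_rpow (by linarith : (1:ℝ)-α/2 ≠ 0)] at hc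
    have hfin := (hrp.comp hmul).const_mul (3*‖Γp‖)
    simpa [Function.comp] using hfin
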